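/- For any ε > 0, there exists a graph G that is interval colorable and satisfies W(G) ≥ (2 − ε)·|V(G)|, where W(G) is the greatest t for which G has an interval t-coloring. -/

import Mathlib

/-- An edge-coloring `c` of a graph `G` with colors `1, 2, ..., t` is an *interval
`t`-coloring* if every edge gets a color in `{1, ..., t}`, every color in `{1, ..., t}`
is used on some edge, the colors of edges incident to any vertex are distinct, and the
set of colors of edges incident to any vertex forms an interval of integers. -/
def IsIntervalColoring {V : Type*} (G : SimpleGraph V) (t : ℕ) (c : Sym2 V → ℕ) : Prop :=
  (∀ e ∈ G.edgeSet, c e ∈ Finset.Icc 1 t) ∧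
  (∀ i ∈ Finset.Icc 1 t, ∃ e ∈ G.edgeSet, c e = i) ∧
  (∀ v : V, ∀ e₁ ∈ G.edgeSet, ∀ e₂ ∈ G.edgeSet,
      v ∈ e₁ → v ∈ e₂ → c e₁ = c e₂ → e₁ = e₂) ∧
  (∀ v : V, ∃ a b : ℕ, {i : ℕ | ∃ e ∈ G.edgeSet, v ∈ e ∧ c e = i} = Set.Icc a b)

/-- `G` admits an interval `t`-coloring. -/
def HasIntervalColoring {V : Type*} (G : SimpleGraph V) (t : ℕ) : Prop :=
  ∃ c : Sym2 V → ℕ, IsIntervalColoring G t c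

/-- `G` is bipartite: the vertices can be split into a set `s` and its complement so
that every edge joins a vertex of `s` to a vertex outside `s`. -/
def IsBipartiteGraph {V : Type*} (G : SimpleGraph V) : Prop :=
  ∃ s : Set V, ∀ ⦃v w : V⦄, G.Adj v w → (v ∈ s ↔ w ∉ s)


set_option linter.unnecessarySeqFocus false

/-- Palette start of vertex `v` in the interval coloring of `K_{2^m}`. -/
def sfun : ℕ → ℕ → ℕ
  | 0, _ => 1
  | m+1, v => if v < 2^m then sfun m v else sfun m (v - 2^m) + (2^m - 1)

/-- The bipartite connector coloring of `K_{2^m, 2^m}`. -/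
def Bfun : ℕ → ℕ → ℕ → ℕ
  | 0, _, _ => 1
  | m+1, x, y =>
    if x < 2^m then
      if y < 2^m then Bfun m x y + 2^m + (if x = y then 2^m else 0)
      else Bfun m x (y - 2^m) + (2^(m+1) - 1)
    else
      if y < 2^m then Bfun m (x - 2^m) y + (2^(m+1) - 1)
      else Bfun m (x - 2^m) (y - 2^m) + (3 * 2^m - 1)

/-- The interval coloring of the complete graph `K_{2^k}`. -/
def Kfun : ℕ → ℕ → ℕ → ℕ
  | 0, _, _ => 0
  | k+1, u, v =>
    if u < 2^k then
      if v < 2^k then Kfun k u v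
      else Bfun k u (v - 2^k)
    else
      if v < 2^k then Bfun k v (u - 2^k)
      else Kfun k (u - 2^k) (v - 2^k) + (2^(k+1) - 1)

lemma sfun_pos (m v : ℕ) : 1 ≤ sfun m v := by
  induction m generalizing v with
  | zero => simp [sfun]
  | succ m ih =>
    rw [sfun]
    split
    · exact ih v
    · have := ih (v - 2^m); omega

lemma sfun_le (m : ℕ) : ∀ v, v < 2^m → sfun m v + m ≤ 2^m := by
  induction m with
  | zero => intro v hv; interval_cases v; simp [sfun]
  | succ m ih =>
    intro v hv
    have hM : 1 ≤ 2^m := Nat.one_le_two_pow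
    have hpow : 2^(m+1) = 2 * 2^m := by ring
    rw [sfun]
    split
    · have := ih v ‹v < 2^m›; omega
    · have h2 : v - 2^m < 2^m := by omega
      have := ih (v - 2^m) h2; omega

lemma sfun_low (m v : ℕ) (h : ¬ v < 2^m) :
    sfun (m+1) v = sfun m (v - 2^m) + (2^m - 1) := by
  rw [sfun, if_neg h]

lemma sfun_hi (m v : ℕ) (h : v < 2^m) : sfun (m+1) v = sfun m v := by
  rw [sfun, if_pos h]

lemma Bsym (m : ℕ) : ∀ x y, x < 2^m → y < 2^m → Bfun m x y = Bfun m y x := by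
  induction m with
  | zero => intro x y hx hy; rfl
  | succ m ih =>
    intro x y hx hy
    rw [Bfun, Bfun]
    rcases lt_or_ge x (2^m) with h1 | h1 <;> rcases lt_or_ge y (2^m) with h2 | h2
    · rw [if_pos h1, if_pos h2, if_pos h2, if_pos h1, ih x y h1 h2]
      by_cases hxy : x = y
      · rw [if_pos hxy, if_pos hxy.symm]
      · rw [if_neg hxy, if_neg (Ne.symm hxy)]
    · have h2' : ¬ y < 2^m := by omega
      rw [if_pos h1, if_neg h2', if_neg h2', if_pos h1, ih x (y - 2^m) h1 (by omega)]
    · have h1' : ¬ x < 2^m := by omega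
      rw [if_neg h1', if_pos h2, if_pos h2, if_neg h1', ih (x - 2^m) y (by omega) h2]
    · have h1' : ¬ x < 2^m := by omega
      have h2' : ¬ y < 2^m := by omega
      rw [if_neg h1', if_neg h2', if_neg h2', if_neg h1',
        ih (x - 2^m) (y - 2^m) (by omega) (by omega)]

lemma Bdiag (m : ℕ) : ∀ x, x < 2^m → Bfun m x x + 2 = sfun m x + 2^(m+1) := by
  induction m with
  | zero => intro x hx; interval_cases x; simp [Bfun, sfun]
  | succ m ih =>
    intro x hx
    have hM : 1 ≤ 2^m := Nat.one_le_two_pow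
    have hpow : 2^(m+1) = 2 * 2^m := by ring
    have hpow2 : 2^(m+2) = 4 * 2^m := by ring
    rw [Bfun, sfun]
    rcases lt_or_ge x (2^m) with h1 | h1
    · rw [if_pos h1, if_pos h1, if_pos h1, if_pos rfl]
      have := ih x h1; omega
    · have h1' : ¬ x < 2^m := by omega
      rw [if_neg h1', if_neg h1', if_neg h1']
      have := ih (x - 2^m) (by omega); omega

lemma Blow (m : ℕ) : ∀ x y, x < 2^m → y < 2^m → sfun m x + 2^m ≤ Bfun m x y + 1 := by
  induction m with
  | zero => intro x y hx hy; interval_cases x; interval_cases y; simp [Bfun, sfun]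
  | succ m ih =>
    intro x y hx hy
    have hM : 1 ≤ 2^m := Nat.one_le_two_pow
    have hpow : 2^(m+1) = 2 * 2^m := by ring
    rw [Bfun, sfun]
    rcases lt_or_ge x (2^m) with h1 | h1 <;> rcases lt_or_ge y (2^m) with h2 | h2
    · rw [if_pos h1, if_pos h1, if_pos h2]
      have := ih x y h1 h2
      split <;> omega
    · have h2' : ¬ y < 2^m := by omega
      rw [if_pos h1, if_pos h1, if_neg h2']
      have := ih x (y - 2^m) h1 (by omega); omega
    · have h1' : ¬ x < 2^m := by omega
      rw [if_neg h1', if_neg h1', if_pos h2]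
      have := ih (x - 2^m) y (by omega) h2; omega
    · have h1' : ¬ x < 2^m := by omega
      have h2' : ¬ y < 2^m := by omega
      rw [if_neg h1', if_neg h1', if_neg h2']
      have := ih (x - 2^m) (y - 2^m) (by omega) (by omega); omega

lemma Bhigh (m : ℕ) : ∀ x y, x < 2^m → y < 2^m → Bfun m x y + 2 ≤ sfun m x + 2^(m+1) := by
  induction m with
  | zero => intro x y hx hy; interval_cases x; interval_cases y; simp [Bfun, sfun]
  | succ m ih =>
    intro x y hx hy
    have hM : 1 ≤ 2^m := Nat.one_le_two_pow
    have hpow : 2^(m+1) = 2 * 2^m := by ring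
    have hpow2 : 2^(m+2) = 4 * 2^m := by ring
    rw [Bfun, sfun]
    rcases lt_or_ge x (2^m) with h1 | h1 <;> rcases lt_or_ge y (2^m) with h2 | h2
    · rw [if_pos h1, if_pos h1, if_pos h2]
      have := ih x y h1 h2
      have hd := Bdiag m x h1
      split <;> omega
    · have h2' : ¬ y < 2^m := by omega
      rw [if_pos h1, if_pos h1, if_neg h2']
      have := ih x (y - 2^m) h1 (by omega); omega
    · have h1' : ¬ x < 2^m := by omega
      rw [if_neg h1', if_neg h1', if_pos h2]
      have := ih (x - 2^m) y (by omega) h2; omega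
    · have h1' : ¬ x < 2^m := by omega
      have h2' : ¬ y < 2^m := by omega
      rw [if_neg h1', if_neg h1', if_neg h2']
      have := ih (x - 2^m) (y - 2^m) (by omega) (by omega); omega

lemma Binj (m : ℕ) : ∀ x y₁ y₂, x < 2^m → y₁ < 2^m → y₂ < 2^m →
    Bfun m x y₁ = Bfun m x y₂ → y₁ = y₂ := by
  induction m with
  | zero => intro x y₁ y₂ hx h1 h2 _; omega
  | succ m ih =>
    intro x y₁ y₂ hx hy1 hy2 heq
    have hM : 1 ≤ 2^m := Nat.one_le_two_pow
    have hpow : 2^(m+1) = 2 * 2^m := by ring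
    rcases lt_or_ge x (2^m) with h1 | h1
    · have hd := Bdiag m x h1
      rcases lt_or_ge y₁ (2^m) with hA | hA <;> rcases lt_or_ge y₂ (2^m) with hB | hB
      · -- both TL
        rw [Bfun, if_pos h1, if_pos hA, Bfun, if_pos h1, if_pos hB] at heq
        by_cases e1 : x = y₁ <;> by_cases e2 : x = y₂
        · omega
        · rw [if_pos e1, if_neg e2] at heq
          have := Bhigh m x y₂ h1 hB
          have := Blow m x y₁ h1 hA
          rw [← e1] at heq; omega
        · rw [if_neg e1, if_pos e2] at heq
          have := Bhigh m x y₁ h1 hA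
          have := Blow m x y₂ h1 hB
          rw [← e2] at heq; omega
        · rw [if_neg e1, if_neg e2] at heq
          exact ih x y₁ y₂ h1 hA hB (by omega)
      · -- y₁ TL, y₂ TR
        have hB' : ¬ y₂ < 2^m := by omega
        rw [Bfun, if_pos h1, if_pos hA, Bfun, if_pos h1, if_neg hB'] at heq
        have hv2lo := Blow m x (y₂ - 2^m) h1 (by omega)
        have hv2hi := Bhigh m x (y₂ - 2^m) h1 (by omega)
        by_cases e1 : x = y₁
        · rw [if_pos e1, ← e1] at heq; omega
        · rw [if_neg e1] at heq
          have hv1hi := Bhigh m x y₁ h1 hA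
          -- forced boundary: Bfun m x y₁ = sfun m x + 2^(m+1) - 2 = Bfun m x x
          have : Bfun m x y₁ = Bfun m x x := by omega
          exact absurd (ih x y₁ x h1 hA h1 this).symm e1
      · -- y₁ TR, y₂ TL
        have hA' : ¬ y₁ < 2^m := by omega
        rw [Bfun, if_pos h1, if_neg hA', Bfun, if_pos h1, if_pos hB] at heq
        have hv1lo := Blow m x (y₁ - 2^m) h1 (by omega)
        have hv1hi := Bhigh m x (y₁ - 2^m) h1 (by omega)
        by_cases e2 : x = y₂
        · rw [if_pos e2, ← e2] at heq; omega
        · rw [if_neg e2] at heq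
          have hv2hi := Bhigh m x y₂ h1 hB
          have : Bfun m x y₂ = Bfun m x x := by omega
          exact absurd (ih x y₂ x h1 hB h1 this).symm e2
      · -- both TR
        have hA' : ¬ y₁ < 2^m := by omega
        have hB' : ¬ y₂ < 2^m := by omega
        rw [Bfun, if_pos h1, if_neg hA', Bfun, if_pos h1, if_neg hB'] at heq
        have := ih x (y₁ - 2^m) (y₂ - 2^m) h1 (by omega) (by omega) (by omega)
        omega
    · have h1' : ¬ x < 2^m := by omega
      rcases lt_or_ge y₁ (2^m) with hA | hA <;> rcases lt_or_ge y₂ (2^m) with hB | hB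
      · rw [Bfun, if_neg h1', if_pos hA, Bfun, if_neg h1', if_pos hB] at heq
        exact ih (x - 2^m) y₁ y₂ (by omega) hA hB (by omega)
      · have hB' : ¬ y₂ < 2^m := by omega
        rw [Bfun, if_neg h1', if_pos hA, Bfun, if_neg h1', if_neg hB'] at heq
        have := Bhigh m (x - 2^m) y₁ (by omega) hA
        have := Blow m (x - 2^m) (y₂ - 2^m) (by omega) (by omega)
        omega
      · have hA' : ¬ y₁ < 2^m := by omega
        rw [Bfun, if_neg h1', if_neg hA', Bfun, if_neg h1', if_pos hB] at heq
        have := Bhigh m (x - 2^m) y₂ (by omega) hB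
        have := Blow m (x - 2^m) (y₁ - 2^m) (by omega) (by omega)
        omega
      · have hA' : ¬ y₁ < 2^m := by omega
        have hB' : ¬ y₂ < 2^m := by omega
        rw [Bfun, if_neg h1', if_neg hA', Bfun, if_neg h1', if_neg hB'] at heq
        have := ih (x - 2^m) (y₁ - 2^m) (y₂ - 2^m) (by omega) (by omega) (by omega) (by omega)
        omega

lemma Bsurj (m : ℕ) : ∀ x c, x < 2^m → sfun m x + 2^m ≤ c + 1 →
    c + 2 ≤ sfun m x + 2^(m+1) → ∃ y, y < 2^m ∧ Bfun m x y = c := by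
  induction m with
  | zero =>
    intro x c hx hlo hhi
    interval_cases x
    simp [sfun] at hlo hhi
    exact ⟨0, by omega, by simp [Bfun]; omega⟩
  | succ m ih =>
    intro x c hx hlo hhi
    have hM : 1 ≤ 2^m := Nat.one_le_two_pow
    have hpow : 2^(m+1) = 2 * 2^m := by ring
    have hpow2 : 2^(m+2) = 4 * 2^m := by ring
    rcases lt_or_ge x (2^m) with h1 | h1
    · rw [sfun_hi m x h1] at hlo hhi
      have hd := Bdiag m x h1
      by_cases htop : c + 2 = sfun m x + 4 * 2^m
      · refine ⟨x, by omega, ?_⟩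
        rw [Bfun, if_pos h1, if_pos h1, if_pos rfl]; omega
      · by_cases htr : sfun m x + 3 * 2^m ≤ c + 2
        · obtain ⟨y, hy, hBy⟩ := ih x (c - (2 * 2^m - 1)) h1 (by omega) (by omega)
          refine ⟨y + 2^m, by omega, ?_⟩
          rw [Bfun, if_pos h1, if_neg (show ¬ y + 2^m < 2^m by omega)]
          have hyy : y + 2^m - 2^m = y := by omega
          rw [hyy]; omega
        · obtain ⟨y, hy, hBy⟩ := ih x (c - 2^m) h1 (by omega) (by omega)
          have hne : x ≠ y := by
            intro e; rw [← e] at hBy; omega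
          refine ⟨y, by omega, ?_⟩
          rw [Bfun, if_pos h1, if_pos hy, if_neg hne]; omega
    · have h1' : ¬ x < 2^m := by omega
      rw [sfun_low m x h1'] at hlo hhi
      have hs' := sfun_pos m (x - 2^m)
      by_cases hbl : c + 2 ≤ sfun m (x - 2^m) + 4 * 2^m - 1
      · obtain ⟨y, hy, hBy⟩ := ih (x - 2^m) (c - (2 * 2^m - 1)) (by omega) (by omega) (by omega)
        refine ⟨y, by omega, ?_⟩
        rw [Bfun, if_neg h1', if_pos hy]; omega
      · obtain ⟨y, hy, hBy⟩ := ih (x - 2^m) (c - (3 * 2^m - 1)) (by omega) (by omega) (by omega)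
        refine ⟨y + 2^m, by omega, ?_⟩
        rw [Bfun, if_neg h1', if_neg (show ¬ y + 2^m < 2^m by omega)]
        have hyy : y + 2^m - 2^m = y := by omega
        rw [hyy]; omega

lemma Bcover (m : ℕ) : ∀ c, 2^m ≤ c → c + m + 2 ≤ 3 * 2^m →
    ∃ x y, x < 2^m ∧ y < 2^m ∧ Bfun m x y = c := by
  induction m with
  | zero =>
    intro c h1 h2
    exact ⟨0, 0, by omega, by omega, by simp [Bfun]; omega⟩
  | succ m ih =>
    intro c hlo hhi
    have hM : m + 1 ≤ 2^m := Nat.lt_two_pow_self (n := m)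
    have hpow : 2^(m+1) = 2 * 2^m := by ring
    by_cases h1 : c ≤ 3 * 2^m - 2
    · obtain ⟨x, y, hx, hy, hB⟩ := ih (c - 2^m) (by omega) (by omega)
      have hne : x ≠ y := by
        intro e
        have hd := Bdiag m x hx
        have := sfun_pos m x
        rw [← e] at hB; omega
      refine ⟨x, y, by omega, by omega, ?_⟩
      rw [Bfun, if_pos hx, if_pos hy, if_neg hne]; omega
    · by_cases h2 : c ≤ 5 * 2^m - m - 3
      · obtain ⟨x, y, hx, hy, hB⟩ := ih (c - (2 * 2^m - 1)) (by omega) (by omega)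
        refine ⟨x, y + 2^m, by omega, by omega, ?_⟩
        rw [Bfun, if_pos hx, if_neg (show ¬ y + 2^m < 2^m by omega)]
        have hyy : y + 2^m - 2^m = y := by omega
        rw [hyy]; omega
      · obtain ⟨x, y, hx, hy, hB⟩ := ih (c - (3 * 2^m - 1)) (by omega) (by omega)
        refine ⟨x + 2^m, y + 2^m, by omega, by omega, ?_⟩
        rw [Bfun, if_neg (show ¬ x + 2^m < 2^m by omega),
          if_neg (show ¬ y + 2^m < 2^m by omega)]
        have hxx : x + 2^m - 2^m = x := by omega
        have hyy : y + 2^m - 2^m = y := by omega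
        rw [hxx, hyy]; omega

lemma Ksym (k : ℕ) : ∀ u v, u < 2^k → v < 2^k → Kfun k u v = Kfun k v u := by
  induction k with
  | zero => intro u v _ _; rfl
  | succ k ih =>
    intro u v hu hv
    rcases lt_or_ge u (2^k) with h1 | h1 <;> rcases lt_or_ge v (2^k) with h2 | h2
    · rw [Kfun, if_pos h1, if_pos h2, Kfun, if_pos h2, if_pos h1, ih u v h1 h2]
    · have h2' : ¬ v < 2^k := by omega
      rw [Kfun, if_pos h1, if_neg h2', Kfun, if_neg h2', if_pos h1]
    · have h1' : ¬ u < 2^k := by omega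
      rw [Kfun, if_neg h1', if_pos h2, Kfun, if_pos h2, if_neg h1']
    · have h1' : ¬ u < 2^k := by omega
      have h2' : ¬ v < 2^k := by omega
      rw [Kfun, if_neg h1', if_neg h2', Kfun, if_neg h2', if_neg h1',
        ih (u - 2^k) (v - 2^k) (by omega) (by omega)]

lemma Klow (k : ℕ) : ∀ u v, u < 2^k → v < 2^k → v ≠ u → sfun k u ≤ Kfun k u v := by
  induction k with
  | zero => intro u v hu hv hne; omega
  | succ k ih =>
    intro u v hu hv hne
    have hM : 1 ≤ 2^k := Nat.one_le_two_pow
    have hpow : 2^(k+1) = 2 * 2^k := by ring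
    rcases lt_or_ge u (2^k) with h1 | h1 <;> rcases lt_or_ge v (2^k) with h2 | h2
    · rw [Kfun, if_pos h1, if_pos h2, sfun_hi k u h1]
      exact ih u v h1 h2 hne
    · have h2' : ¬ v < 2^k := by omega
      rw [Kfun, if_pos h1, if_neg h2', sfun_hi k u h1]
      have := Blow k u (v - 2^k) h1 (by omega); omega
    · have h1' : ¬ u < 2^k := by omega
      rw [Kfun, if_neg h1', if_pos h2, sfun_low k u h1',
        Bsym k v (u - 2^k) h2 (by omega)]
      have := Blow k (u - 2^k) v (by omega) h2; omega
    · have h1' : ¬ u < 2^k := by omega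
      have h2' : ¬ v < 2^k := by omega
      rw [Kfun, if_neg h1', if_neg h2', sfun_low k u h1']
      have := ih (u - 2^k) (v - 2^k) (by omega) (by omega) (by omega); omega

lemma Khigh (k : ℕ) : ∀ u v, u < 2^k → v < 2^k → v ≠ u →
    Kfun k u v + 2 ≤ sfun k u + 2^k := by
  induction k with
  | zero => intro u v hu hv hne; omega
  | succ k ih =>
    intro u v hu hv hne
    have hM : 1 ≤ 2^k := Nat.one_le_two_pow
    have hpow : 2^(k+1) = 2 * 2^k := by ring
    rcases lt_or_ge u (2^k) with h1 | h1 <;> rcases lt_or_ge v (2^k) with h2 | h2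
    · rw [Kfun, if_pos h1, if_pos h2, sfun_hi k u h1]
      have := ih u v h1 h2 hne; omega
    · have h2' : ¬ v < 2^k := by omega
      rw [Kfun, if_pos h1, if_neg h2', sfun_hi k u h1]
      have := Bhigh k u (v - 2^k) h1 (by omega); omega
    · have h1' : ¬ u < 2^k := by omega
      rw [Kfun, if_neg h1', if_pos h2, sfun_low k u h1',
        Bsym k v (u - 2^k) h2 (by omega)]
      have := Bhigh k (u - 2^k) v (by omega) h2; omega
    · have h1' : ¬ u < 2^k := by omega
      have h2' : ¬ v < 2^k := by omega
      rw [Kfun, if_neg h1', if_neg h2', sfun_low k u h1']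
      have := ih (u - 2^k) (v - 2^k) (by omega) (by omega) (by omega); omega

lemma Kinj (k : ℕ) : ∀ u v₁ v₂, u < 2^k → v₁ < 2^k → v₂ < 2^k → v₁ ≠ u → v₂ ≠ u →
    Kfun k u v₁ = Kfun k u v₂ → v₁ = v₂ := by
  induction k with
  | zero => intro u v₁ v₂ hu h1 h2 _ _ _; omega
  | succ k ih =>
    intro u v₁ v₂ hu hv1 hv2 hne1 hne2 heq
    have hM : 1 ≤ 2^k := Nat.one_le_two_pow
    have hpow : 2^(k+1) = 2 * 2^k := by ring
    rcases lt_or_ge u (2^k) with h1 | h1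
    · rcases lt_or_ge v₁ (2^k) with hA | hA <;> rcases lt_or_ge v₂ (2^k) with hB | hB
      · rw [Kfun, if_pos h1, if_pos hA, Kfun, if_pos h1, if_pos hB] at heq
        exact ih u v₁ v₂ h1 hA hB hne1 hne2 heq
      · have hB' : ¬ v₂ < 2^k := by omega
        rw [Kfun, if_pos h1, if_pos hA, Kfun, if_pos h1, if_neg hB'] at heq
        have := Khigh k u v₁ h1 hA hne1
        have := Blow k u (v₂ - 2^k) h1 (by omega)
        omega
      · have hA' : ¬ v₁ < 2^k := by omega
        rw [Kfun, if_pos h1, if_neg hA', Kfun, if_pos h1, if_pos hB] at heq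
        have := Khigh k u v₂ h1 hB hne2
        have := Blow k u (v₁ - 2^k) h1 (by omega)
        omega
      · have hA' : ¬ v₁ < 2^k := by omega
        have hB' : ¬ v₂ < 2^k := by omega
        rw [Kfun, if_pos h1, if_neg hA', Kfun, if_pos h1, if_neg hB'] at heq
        have := Binj k u (v₁ - 2^k) (v₂ - 2^k) h1 (by omega) (by omega) heq
        omega
    · have h1' : ¬ u < 2^k := by omega
      rcases lt_or_ge v₁ (2^k) with hA | hA <;> rcases lt_or_ge v₂ (2^k) with hB | hB
      · rw [Kfun, if_neg h1', if_pos hA, Kfun, if_neg h1', if_pos hB,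
          Bsym k v₁ (u - 2^k) hA (by omega), Bsym k v₂ (u - 2^k) hB (by omega)] at heq
        exact Binj k (u - 2^k) v₁ v₂ (by omega) hA hB heq
      · have hB' : ¬ v₂ < 2^k := by omega
        rw [Kfun, if_neg h1', if_pos hA, Kfun, if_neg h1', if_neg hB',
          Bsym k v₁ (u - 2^k) hA (by omega)] at heq
        have := Bhigh k (u - 2^k) v₁ (by omega) hA
        have := Klow k (u - 2^k) (v₂ - 2^k) (by omega) (by omega) (by omega)
        omega
      · have hA' : ¬ v₁ < 2^k := by omega
        rw [Kfun, if_neg h1', if_neg hA', Kfun, if_neg h1', if_pos hB,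
          Bsym k v₂ (u - 2^k) hB (by omega)] at heq
        have := Bhigh k (u - 2^k) v₂ (by omega) hB
        have := Klow k (u - 2^k) (v₁ - 2^k) (by omega) (by omega) (by omega)
        omega
      · have hA' : ¬ v₁ < 2^k := by omega
        have hB' : ¬ v₂ < 2^k := by omega
        rw [Kfun, if_neg h1', if_neg hA', Kfun, if_neg h1', if_neg hB'] at heq
        have := ih (u - 2^k) (v₁ - 2^k) (v₂ - 2^k) (by omega) (by omega) (by omega)
          (by omega) (by omega) (by omega)
        omega

lemma Ksurj (k : ℕ) : ∀ u c, u < 2^k → sfun k u ≤ c → c + 2 ≤ sfun k u + 2^k →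
    ∃ v, v < 2^k ∧ v ≠ u ∧ Kfun k u v = c := by
  induction k with
  | zero =>
    intro u c hu hlo hhi
    interval_cases u
    simp [sfun] at hlo hhi
    omega
  | succ k ih =>
    intro u c hu hlo hhi
    have hM : 1 ≤ 2^k := Nat.one_le_two_pow
    have hpow : 2^(k+1) = 2 * 2^k := by ring
    rcases lt_or_ge u (2^k) with h1 | h1
    · rw [sfun_hi k u h1] at hlo hhi
      by_cases hlow : c + 2 ≤ sfun k u + 2^k
      · obtain ⟨v, hv, hvne, hK⟩ := ih u c h1 hlo hlow
        refine ⟨v, by omega, hvne, ?_⟩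
        rw [Kfun, if_pos h1, if_pos hv]; exact hK
      · obtain ⟨y, hy, hB⟩ := Bsurj k u c h1 (by omega) (by omega)
        refine ⟨y + 2^k, by omega, by omega, ?_⟩
        rw [Kfun, if_pos h1, if_neg (show ¬ y + 2^k < 2^k by omega)]
        have hyy : y + 2^k - 2^k = y := by omega
        rw [hyy]; exact hB
    · have h1' : ¬ u < 2^k := by omega
      rw [sfun_low k u h1'] at hlo hhi
      have hs' := sfun_pos k (u - 2^k)
      by_cases hcr : c + 2 ≤ sfun k (u - 2^k) + 2 * 2^k
      · obtain ⟨y, hy, hB⟩ := Bsurj k (u - 2^k) c (by omega) (by omega) (by omega)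
        refine ⟨y, by omega, by omega, ?_⟩
        rw [Kfun, if_neg h1', if_pos hy, Bsym k y (u - 2^k) hy (by omega)]
        exact hB
      · obtain ⟨v, hv, hvne, hK⟩ := ih (u - 2^k) (c - (2 * 2^k - 1)) (by omega)
          (by omega) (by omega)
        refine ⟨v + 2^k, by omega, by omega, ?_⟩
        rw [Kfun, if_neg h1', if_neg (show ¬ v + 2^k < 2^k by omega)]
        have hvv : v + 2^k - 2^k = v := by omega
        have huu : u - 2^k = u - 2^k := rfl
        rw [hvv]; omega

lemma Kcover (k : ℕ) : ∀ c, 1 ≤ c → c + k + 2 ≤ 2^(k+1) →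
    ∃ u v, u < 2^k ∧ v < 2^k ∧ u ≠ v ∧ Kfun k u v = c := by
  induction k with
  | zero => intro c h1 h2; omega
  | succ k ih =>
    intro c hlo hhi
    have hM : k + 1 ≤ 2^k := Nat.lt_two_pow_self (n := k)
    have hpow : 2^(k+1) = 2 * 2^k := by ring
    have hpow2 : 2^(k+2) = 4 * 2^k := by ring
    by_cases h1 : c + k + 2 ≤ 2 * 2^k
    · obtain ⟨u, v, hu, hv, hne, hK⟩ := ih c hlo (by omega)
      refine ⟨u, v, by omega, by omega, hne, ?_⟩
      rw [Kfun, if_pos hu, if_pos hv]; exact hK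
    · by_cases h2 : c + k + 2 ≤ 3 * 2^k
      · obtain ⟨x, y, hx, hy, hB⟩ := Bcover k c (by omega) (by omega)
        refine ⟨x, y + 2^k, by omega, by omega, by omega, ?_⟩
        rw [Kfun, if_pos hx, if_neg (show ¬ y + 2^k < 2^k by omega)]
        have hyy : y + 2^k - 2^k = y := by omega
        rw [hyy]; exact hB
      · obtain ⟨u, v, hu, hv, hne, hK⟩ := ih (c - (2 * 2^k - 1)) (by omega) (by omega)
        refine ⟨u + 2^k, v + 2^k, by omega, by omega, by omega, ?_⟩
        rw [Kfun, if_neg (show ¬ u + 2^k < 2^k by omega),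
          if_neg (show ¬ v + 2^k < 2^k by omega)]
        have huu : u + 2^k - 2^k = u := by omega
        have hvv : v + 2^k - 2^k = v := by omega
        rw [huu, hvv]; omega

lemma main_coloring (k : ℕ) (hk : 1 ≤ k) :
    HasIntervalColoring (⊤ : SimpleGraph (Fin (2^k))) (2^(k+1) - k - 2) := by
  classical
  have hM2 : 2 ≤ 2^k := by
    calc 2 = 2^1 := rfl
    _ ≤ 2^k := Nat.pow_le_pow_right (by norm_num) hk
  have hMk : k + 1 ≤ 2^k := Nat.lt_two_pow_self (n := k)
  have hpow : 2^(k+1) = 2 * 2^k := by ring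
  have key : ∀ (e : Sym2 (Fin (2^k))) (v : Fin (2^k)),
      e ∈ (⊤ : SimpleGraph (Fin (2^k))).edgeSet → v ∈ e →
      ∃ w : Fin (2^k), w.val ≠ v.val ∧ e = s(v, w) := by
    intro e v
    induction e using Sym2.ind with
    | _ a b =>
      intro he hv
      rw [SimpleGraph.mem_edgeSet, SimpleGraph.top_adj] at he
      rw [Sym2.mem_iff] at hv
      rcases hv with rfl | rfl
      · exact ⟨b, fun h => he (Fin.val_injective h).symm, rfl⟩
      · exact ⟨a, fun h => he (Fin.val_injective h), Sym2.eq_swap⟩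
  refine ⟨Sym2.lift ⟨fun u v => Kfun k u.val v.val,
    fun u v => Ksym k u.val v.val u.isLt v.isLt⟩, ?_, ?_, ?_, ?_⟩
  · -- edge colors lie in [1, t]
    intro e he
    induction e using Sym2.ind with
    | _ u v =>
      rw [SimpleGraph.mem_edgeSet, SimpleGraph.top_adj] at he
      have hne : v.val ≠ u.val := fun h => he (Fin.val_injective h).symm
      simp only [Sym2.lift_mk]
      rw [Finset.mem_Icc]
      have h1 := Klow k u.val v.val u.isLt v.isLt hne
      have h2 := Khigh k u.val v.val u.isLt v.isLt hne
      have h3 := sfun_pos k u.val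
      have h4 := sfun_le k u.val u.isLt
      omega
  · -- every color is used
    intro i hi
    rw [Finset.mem_Icc] at hi
    obtain ⟨u, v, hu, hv, hne, hK⟩ := Kcover k i hi.1 (by omega)
    refine ⟨s(⟨u, hu⟩, ⟨v, hv⟩), ?_, ?_⟩
    · rw [SimpleGraph.mem_edgeSet, SimpleGraph.top_adj]
      simp only [ne_eq, Fin.mk.injEq]
      exact hne
    · simpa using hK
  · -- colors at a vertex are distinct
    intro v e₁ he₁ e₂ he₂ hv1 hv2 heq
    obtain ⟨w₁, hw₁, rfl⟩ := key e₁ v he₁ hv1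
    obtain ⟨w₂, hw₂, rfl⟩ := key e₂ v he₂ hv2
    simp only [Sym2.lift_mk] at heq
    have := Kinj k v.val w₁.val w₂.val v.isLt w₁.isLt w₂.isLt hw₁ hw₂ heq
    rw [Fin.val_injective this]
  · -- the palette of each vertex is an interval
    intro v
    refine ⟨sfun k v.val, sfun k v.val + (2^k - 2), ?_⟩
    ext i
    simp only [Set.mem_setOf_eq, Set.mem_Icc]
    constructor
    · rintro ⟨e, he, hv, rfl⟩
      obtain ⟨w, hw, rfl⟩ := key e v he hv
      simp only [Sym2.lift_mk]
      have h1 := Klow k v.val w.val v.isLt w.isLt hw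
      have h2 := Khigh k v.val w.val v.isLt w.isLt hw
      omega
    · rintro ⟨hlo, hhi⟩
      obtain ⟨w, hwlt, hwne, hK⟩ := Ksurj k v.val i v.isLt hlo (by omega)
      refine ⟨s(v, ⟨w, hwlt⟩), ?_, ?_, ?_⟩
      · rw [SimpleGraph.mem_edgeSet, SimpleGraph.top_adj]
        intro h
        exact hwne (congrArg Fin.val h.symm)
      · exact Sym2.mem_mk_left v _
      · simpa using hK

theorem exists_graph_large_interval_coloring' (ε : ℝ) (hε : 0 < ε) :
    ∃ (V : Type) (_ : Fintype V) (G : SimpleGraph V) (t : ℕ),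
      1 ≤ t ∧ HasIntervalColoring G t ∧ (t : ℝ) ≥ (2 - ε) * Fintype.card V := by
  obtain ⟨j, hj⟩ := pow_unbounded_of_one_lt (1/ε) (one_lt_two (α := ℝ))
  set k := 2*j + 4 with hkdef
  have hk1 : 1 ≤ k := by omega
  have hj2 : j + 1 ≤ 2^j := Nat.lt_two_pow_self (n := j)
  have hnat : k + 2 ≤ 2^(j+4) := by
    have h16 : 2^(j+4) = 16 * 2^j := by ring
    omega
  have hck : k < 2^k := Nat.lt_two_pow_self (n := k)
  have hpk : 2^(k+1) = 2 * 2^k := by ring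
  have hk2 : k + 3 ≤ 2^(k+1) := by omega
  refine ⟨Fin (2^k), inferInstance, ⊤, 2^(k+1) - k - 2, ?_, main_coloring k hk1, ?_⟩
  · omega
  · rw [Fintype.card_fin, ge_iff_le]
    have hcast : ((2^(k+1) - k - 2 : ℕ) : ℝ) = 2^(k+1) - (k+2) := by
      rw [show (2^(k+1) - k - 2 : ℕ) = 2^(k+1) - (k+2) from by omega, Nat.cast_sub (by omega : k + 2 ≤ 2^(k+1))]
      push_cast
      ring
    rw [hcast]
    have h1 : (1:ℝ) < 2^j * ε := by
      have := (div_lt_iff₀ hε).mp hj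
      linarith
    have h2 : ((k:ℝ)+2) ≤ 2^(j+4) := by
      have := hnat
      exact_mod_cast this
    have hsplit : (2:ℝ)^k = 2^j * 2^(j+4) := by
      rw [← pow_add]
      congr 1
      omega
    have h3 : ((k:ℝ)+2) ≤ ε * 2^k := by
      rw [hsplit]
      calc ((k:ℝ)+2) ≤ 2^(j+4) := h2
      _ ≤ (2^j * ε) * 2^(j+4) := le_mul_of_one_le_left (by positivity) (le_of_lt h1)
      _ = ε * (2^j * 2^(j+4)) := by ring
    have hp : (2:ℝ)^(k+1) = 2 * 2^k := by ring
    have hc : ((2^k : ℕ) : ℝ) = (2:ℝ)^k := by push_cast; ring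
    rw [hc]
    have expand : (2 - ε) * (2:ℝ)^k = 2*2^k - ε*2^k := by ring
    rw [expand, hp]
    linarith [h3]

/-- For any `ε > 0` there is an interval colorable graph `G` with
`W(G) ≥ (2 - ε) * |V(G)|`: indeed, `G` admits an interval `t`-coloring for some
`t ≥ 1` with `(t : ℝ) ≥ (2 - ε) * |V(G)|`. -/
theorem exists_graph_large_interval_coloring (ε : ℝ) (hε : 0 < ε) :
    ∃ (V : Type) (_ : Fintype V) (G : SimpleGraph V) (t : ℕ),
      1 ≤ t ∧ HasIntervalColoring G t ∧ (t : ℝ) ≥ (2 - ε) * Fintype.card V := by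
  exact exists_graph_large_interval_coloring' ε hε
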